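/- Let r, K, a, b, c, δ, h, w be positive real numbers with b < (c/(2δ))², set D₂ = c² − 4bδ², N₅ = (c − √D₂)/(2δ), P₅ = r(b+N₅²)((K−w)N₅ − K(h−w) − N₅²)/(K·a·(w+N₅)), suppose P₅ > 0, and suppose the trace T = hrN₅/(w+N₅)² + 2aN₅²P₅/(b+N₅²)² − rN₅/K is negative. Then the Jacobian matrix J₅ = !![T, −δ/c; (c − 2δN₅)P₅/(b+N₅²), 0] has positive determinant and negative trace, and every complex eigenvalue of J₅ has negative real part; in particular the coexistence equilibrium E₅ = (N₅, P₅) is locally asymptotically stable. -/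

import Mathlib

/-- If the trace of the Jacobian at the coexistence equilibrium E₅ = (N₅, P₅)
is negative, then the Jacobian has positive determinant and negative trace,
and every complex eigenvalue has negative real part: E₅ is locally
asymptotically stable. -/
theorem coexistence_E5_stable (r K a b c δ h w D₂ N₅ P₅ T : ℝ)
    (hr : 0 < r) (hK : 0 < K) (ha : 0 < a) (hb : 0 < b) (hc : 0 < c)
    (hδ : 0 < δ) (hh : 0 < h) (hw : 0 < w) (hlt : b < (c / (2 * δ)) ^ 2)
    (hD : D₂ = c ^ 2 - 4 * b * δ ^ 2)
    (hN₅ : N₅ = (c - Real.sqrt D₂) / (2 * δ))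
    (hP₅ : P₅ = r * (b + N₅ ^ 2) * ((K - w) * N₅ - K * (h - w) - N₅ ^ 2) /
      (K * a * (w + N₅)))
    (hP₅pos : 0 < P₅)
    (hT : T = h * r * N₅ / (w + N₅) ^ 2 + 2 * a * N₅ ^ 2 * P₅ / (b + N₅ ^ 2) ^ 2
      - r * N₅ / K)
    (hTneg : T < 0)
    (J₅ : Matrix (Fin 2) (Fin 2) ℝ)
    (hJ : J₅ = !![T, -(δ / c); (c - 2 * δ * N₅) * P₅ / (b + N₅ ^ 2), 0]) :
    0 < J₅.det ∧ J₅.trace < 0 ∧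
    ∀ μ ∈ spectrum ℂ (J₅.map (Complex.ofReal)), μ.re < 0 := by
  have hδ' : (2 * δ) ≠ 0 := by positivity
  have hDpos : 0 < D₂ := by
    rw [hD]
    have h4 : b * (2 * δ) ^ 2 < (c / (2 * δ)) ^ 2 * (2 * δ) ^ 2 := by
      apply mul_lt_mul_of_pos_right hlt; positivity
    rw [div_pow, div_mul_cancel₀] at h4
    · nlinarith
    · positivity
  have hsqrt : 0 < Real.sqrt D₂ := Real.sqrt_pos.mpr hDpos
  have hsub : c - 2 * δ * N₅ = Real.sqrt D₂ := by
    rw [hN₅]; field_simp; ring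
  have hbN : 0 < b + N₅ ^ 2 := by positivity
  -- the off-diagonal entry is positive
  have hS : 0 < (c - 2 * δ * N₅) * P₅ / (b + N₅ ^ 2) := by
    rw [hsub]; positivity
  set S : ℝ := (c - 2 * δ * N₅) * P₅ / (b + N₅ ^ 2) with hSdef
  have hdet : J₅.det = δ / c * S := by
    rw [hJ]; rw [Matrix.det_fin_two_of]; ring
  have hdetpos : 0 < J₅.det := by rw [hdet]; positivity
  have htr : J₅.trace = T := by
    rw [hJ, Matrix.trace_fin_two_of]; ring
  refine ⟨hdetpos, by rw [htr]; exact hTneg, ?_⟩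
  intro μ hμ
  -- characteristic equation
  rw [spectrum.mem_iff, Matrix.isUnit_iff_isUnit_det, isUnit_iff_ne_zero,
    not_ne_iff] at hμ
  have hmap : J₅.map Complex.ofReal = !![(T : ℂ), -((δ : ℂ) / c); (S : ℂ), 0] := by
    rw [hJ]
    ext i j
    fin_cases i <;> fin_cases j <;>
      simp [Matrix.map_apply, hSdef] <;> push_cast <;> ring
  rw [hmap] at hμ
  have heq : μ ^ 2 - (T : ℂ) * μ + ((δ / c * S : ℝ) : ℂ) = 0 := by
    have hcalc : (algebraMap ℂ (Matrix (Fin 2) (Fin 2) ℂ) μ -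
        !![(T : ℂ), -((δ : ℂ) / c); (S : ℂ), 0]).det
        = μ ^ 2 - (T : ℂ) * μ + ((δ / c * S : ℝ) : ℂ) := by
      simp [Matrix.det_fin_two, Matrix.sub_apply, Matrix.algebraMap_eq_diagonal,
        Matrix.diagonal_apply]
      push_cast
      ring
    rw [← hcalc]; exact hμ
  have hre := congrArg Complex.re heq
  have him := congrArg Complex.im heq
  simp [pow_two, Complex.mul_re, Complex.mul_im] at hre him
  have hDrpos : 0 < δ / c * S := by positivity
  rcases eq_or_ne μ.im 0 with hy | hy
  · -- real eigenvalue
    rw [hy] at hre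
    by_contra hx
    push_neg at hx
    clear heq him hμ hmap hP₅ hT hN₅ hD hlt
    nlinarith [sq_nonneg μ.re]
  · -- complex pair: 2 re = T
    have : μ.im * (2 * μ.re - T) = 0 := by linear_combination him
    have h2 : 2 * μ.re - T = 0 := by
      rcases mul_eq_zero.mp this with h | h
      · exact absurd h hy
      · exact h
    linarith
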